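/- Let q be a power of 2, and let σ_0, …, σ_q be the (q+1) distinct roots in F_{q^2} of p(t) = t^{q+1} + α^q t^q + α t + γ. Define P_k = Σ_{i=0}^q σ_i^k. Then for all 0 ≤ k < q, P_k = α^{qk}. -/

import Mathlib

open Polynomial

/-- If `p(t) = t^(q+1) + α^q t^q + α t + γ` has `q+1` distinct roots `σ_0, …, σ_q` in `F_{q^2}`
(`q` a power of 2), then the power sums satisfy `P_k = α^(qk)` for `0 ≤ k < q`. -/
theorem stmt_7 {ℓ q : ℕ} (hq : q = 2 ^ ℓ) (hℓ : 1 ≤ ℓ) {F : Type*} [Field F] [Fintype F]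
    (hF : Fintype.card F = q ^ 2) [CharP F 2] (α γ : F) (σ : Fin (q + 1) → F)
    (hinj : Function.Injective σ)
    (hp : (X ^ (q + 1) + C (α ^ q) * X ^ q + C α * X + C γ : F[X]) = ∏ i, (X - C (σ i))) :
    ∀ k < q, ∑ i, σ i ^ k = α ^ (q * k) := by
  have hq2 : 2 ≤ q := hq ▸ (by calc 2 = 2^1 := rfl
                                 _ ≤ 2^ℓ := Nat.pow_le_pow_right (by norm_num) hℓ)
  have hneg : (-1 : F) = 1 := by
    have := CharTwo.neg_eq (1 : F); linear_combination this
  -- the multiset of roots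
  set M : Multiset F := Multiset.map σ Finset.univ.val with hM
  have hMcard : Multiset.card M = q + 1 := by simp [hM]
  -- esymm values of the roots
  set E : ℕ → F := fun j => M.esymm j with hE
  -- prod over univ equals multiset prod
  have hprod : (∏ i, (X - C (σ i)) : F[X]) = (M.map fun t => X - C t).prod := by
    rw [hM, Multiset.map_map]; rfl
  -- coefficient formula
  have hcoeff : ∀ m : ℕ, m ≤ q + 1 →
      E m = (X ^ (q + 1) + C (α ^ q) * X ^ q + C α * X + C γ : F[X]).coeff (q + 1 - m) := by
    intro m hm
    have hk : q + 1 - m ≤ Multiset.card M := by omega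
    have := Multiset.prod_X_sub_C_coeff M hk
    rw [hMcard] at this
    have hmm : q + 1 - (q + 1 - m) = m := by omega
    rw [hmm] at this
    rw [hp, hprod, this, hneg, one_pow, one_mul]
  -- compute coefficients of the explicit polynomial
  have hcoeff_poly : ∀ n : ℕ, n ≠ q + 1 → n ≠ q → n ≠ 1 → n ≠ 0 →
      (X ^ (q + 1) + C (α ^ q) * X ^ q + C α * X + C γ : F[X]).coeff n = 0 := by
    intro n h1 h2 h3 h4
    simp only [coeff_add, coeff_X_pow, coeff_C_mul, coeff_X, coeff_C,
      if_neg h1, if_neg h2, if_neg (by omega : ¬ (1 = n)), if_neg h4]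
    ring
  -- E 1 = α^q
  have hE1 : E 1 = α ^ q := by
    rw [hcoeff 1 (by omega)]
    have h1 : q + 1 - 1 = q := by omega
    rw [h1]
    simp only [coeff_add, coeff_X_pow, coeff_C_mul, coeff_X, coeff_C,
      if_neg (by omega : ¬ q = q + 1), if_pos rfl,
      if_neg (by omega : ¬ (1 = q)), if_neg (by omega : ¬ q = 0)]
    simp
  -- E j = 0 for 2 ≤ j ≤ q - 1
  have hE0 : ∀ j, 2 ≤ j → j ≤ q - 1 → E j = 0 := by
    intro j h2 hj
    rw [hcoeff j (by omega)]
    exact hcoeff_poly _ (by omega) (by omega) (by omega) (by omega)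
  -- aeval of esymm and psum
  have haevalE : ∀ j, (MvPolynomial.aeval σ) (MvPolynomial.esymm (Fin (q+1)) F j) = E j := by
    intro j; rw [MvPolynomial.aeval_esymm_eq_multiset_esymm]
  have haevalP : ∀ k, (MvPolynomial.aeval σ) (MvPolynomial.psum (Fin (q+1)) F k)
      = ∑ i, σ i ^ k := by
    intro k; simp [MvPolynomial.psum]
  -- Newton's identities, evaluated
  have newton : ∀ k : ℕ, 0 < k →
      (∑ i, σ i ^ k) = (-1)^(k+1) * k * E k -
        ∑ a ∈ Finset.HasAntidiagonal.antidiagonal k with a.1 ∈ Set.Ioo 0 k,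
          (-1) ^ a.1 * E a.1 * (∑ i, σ i ^ a.2) := by
    intro k hk
    have := congrArg (MvPolynomial.aeval σ)
      (MvPolynomial.psum_eq_mul_esymm_sub_sum (Fin (q+1)) F k hk)
    simpa [haevalE, haevalP, map_sub, map_mul, map_pow, map_sum, map_natCast] using this
  -- main induction
  intro k hk
  induction k using Nat.strong_induction_on with
  | _ k ih =>
  match k, hk with
  | 0, _ =>
    simp only [pow_zero, Finset.sum_const, Finset.card_univ, Fintype.card_fin, nsmul_eq_mul,
      mul_one, Nat.mul_zero]
    have hq0 : (q : F) = 0 := by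
      rw [hq]; push_cast
      rw [show (2 : F) = (2 : ℕ) by norm_num, show ((2:ℕ) : F) = 0 from CharP.cast_eq_zero F 2]
      exact zero_pow (by omega)
    push_cast
    rw [hq0]; ring
  | 1, _ =>
    have h := newton 1 (by norm_num)
    have hsum0 : (∑ a ∈ Finset.HasAntidiagonal.antidiagonal 1 with a.1 ∈ Set.Ioo 0 1,
        (-1:F) ^ a.1 * E a.1 * (∑ i, σ i ^ a.2)) = 0 := by
      apply Finset.sum_eq_zero
      intro a ha
      simp only [Finset.mem_filter, Set.mem_Ioo] at ha
      omega
    rw [h, hsum0, hE1]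
    simp [mul_one]
  | (m+2), hk =>
    have h := newton (m+2) (by omega)
    have hEk : E (m+2) = 0 := hE0 (m+2) (by omega) (by omega)
    have hsum : (∑ a ∈ Finset.HasAntidiagonal.antidiagonal (m+2) with a.1 ∈ Set.Ioo 0 (m+2),
        (-1:F) ^ a.1 * E a.1 * (∑ i, σ i ^ a.2))
        = (-1)^1 * E 1 * (∑ i, σ i ^ (m+1)) := by
      apply Finset.sum_eq_single_of_mem (1, m+1)
      · simp [Finset.mem_filter, Finset.mem_antidiagonal]; omega
      · intro a ha hne
        simp only [Finset.mem_filter, Finset.mem_antidiagonal, Set.mem_Ioo] at ha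
        have ha1 : 2 ≤ a.1 := by
          rcases Nat.lt_or_ge a.1 2 with h2 | h2
          · exfalso; apply hne
            have : a.1 = 1 := by omega
            have : a.2 = m + 1 := by have := Finset.HasAntidiagonal.mem_antidiagonal.mp ha.1; omega
            exact Prod.ext (by omega) this
          · exact h2
        rw [hE0 a.1 ha1 (by omega)]
        ring
    have hih : (∑ i, σ i ^ (m+1)) = α ^ (q * (m+1)) := ih (m+1) (by omega) (by omega)
    rw [h, hEk, hsum, hE1, hih, hneg]
    rw [mul_zero, zero_sub, one_pow]
    rw [show (-(1 * α ^ q * α ^ (q * (m+1))) : F) = -1 * (α ^ q * α ^ (q * (m+1))) by ring,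
      hneg, one_mul, ← pow_add]
    congr 1
    ring
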